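/- (Sen's non-commutative union bound) Let ρ be a positive semidefinite operator with Tr[ρ] ≤ 1 and let P₁,…,P_k be orthogonal projectors on a finite-dimensional Hilbert space, with complementary projectors Q_i = 1 − P_i. Then Tr[P_k⋯P₁ ρ P₁⋯P_k] ≥ Tr[ρ] − 2√(Σ_{i=1}^k Tr[ρ Q_i]). -/

import Mathlib

open Matrix ComplexOrder BigOperators Finset

noncomputable def traceNorm {d : Type*} [Fintype d] [DecidableEq d] (A : Matrix d d ℂ) : ℝ :=
  (((Matrix.posSemidef_conjTranspose_mul_self A).1.eigenvectorUnitary : Matrix d d ℂ) *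
    diagonal (((↑) : ℝ → ℂ) ∘ Real.sqrt ∘ (Matrix.posSemidef_conjTranspose_mul_self A).1.eigenvalues) *
    (star ((Matrix.posSemidef_conjTranspose_mul_self A).1.eigenvectorUnitary : Matrix d d ℂ))).trace.re

noncomputable def traceDist {d : Type*} [Fintype d] [DecidableEq d] (A B : Matrix d d ℂ) : ℝ :=
  traceNorm (A - B) / 2

set_option linter.unusedSectionVars false

namespace SenAux
variable {d : Type*} [Fintype d] [DecidableEq d]

noncomputable def toE (A : Matrix d d ℂ) : EuclideanSpace ℂ (d × d) := WithLp.toLp 2 (fun p : d × d => A p.1 p.2)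

lemma inner_toE (A B : Matrix d d ℂ) : (inner ℂ (toE A) (toE B) : ℂ) = (Aᴴ * B).trace := by
  rw [PiLp.inner_apply]
  simp only [Matrix.trace, Matrix.diag, Matrix.mul_apply, Matrix.conjTranspose_apply, toE]
  rw [← Fintype.sum_prod_type']
  simp only [RCLike.inner_apply, mul_comm]
  exact (Equiv.prodComm d d).sum_comp _ |>.symm

lemma toE_sub (A B : Matrix d d ℂ) : toE (A - B) = toE A - toE B := by
  rw [toE, toE, toE, ← WithLp.toLp_sub]; rfl

noncomputable def nsq (A : Matrix d d ℂ) : ℝ := ‖toE A‖ ^ 2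

lemma nsq_eq (A : Matrix d d ℂ) : nsq A = ((Aᴴ * A).trace).re := by
  rw [nsq, ← inner_toE, ← RCLike.re_to_complex]
  exact (inner_self_eq_norm_sq (𝕜 := ℂ) (toE A)).symm

lemma herm_idem_cross (Pm X : Matrix d d ℂ) (hH : Pmᴴ = Pm) (hI : Pm * Pm = Pm) :
    (Pm * X)ᴴ * (Pm * X) = Xᴴ * (Pm * X) := by
  rw [Matrix.conjTranspose_mul, hH, Matrix.mul_assoc, ← Matrix.mul_assoc Pm, hI]

lemma pythagoras (Pm X : Matrix d d ℂ) (hH : Pmᴴ = Pm) (hI : Pm * Pm = Pm)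
    (hQH : (1 - Pm)ᴴ = 1 - Pm) (hQI : (1 - Pm) * (1 - Pm) = 1 - Pm) :
    nsq X = nsq (Pm * X) + nsq ((1 - Pm) * X) := by
  simp only [nsq_eq, herm_idem_cross _ _ hH hI, herm_idem_cross _ _ hQH hQI]
  rw [← Complex.add_re, ← Matrix.trace_add, ← Matrix.mul_add, ← Matrix.add_mul]
  have h1 : Pm + (1 - Pm) = 1 := by abel
  rw [h1, Matrix.one_mul]

lemma cross (W Q S : Matrix d d ℂ) (hQH : Qᴴ = Q) (hQI : Q * Q = Q) :
    (Sᴴ * (Wᴴ * (Q * S))).trace = ((Q * (W * S))ᴴ * (Q * S)).trace := by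
  simp only [Matrix.conjTranspose_mul, hQH, Matrix.mul_assoc]
  rw [← Matrix.mul_assoc Q Q S, hQI]

lemma conjTranspose_list_prod (l : List (Matrix d d ℂ)) :
    (l.prod)ᴴ = (l.map conjTranspose).reverse.prod := by
  induction l with
  | nil => simp
  | cons a t ih => simp [Matrix.conjTranspose_mul, ih]

end SenAux

open SenAux

/-- Sen's non-commutative union bound. -/
theorem sen_noncommutative_union_bound {d : Type*} [Fintype d] [DecidableEq d]
    (ρ : Matrix d d ℂ) (hρ : ρ.PosSemidef) (hρtr : (ρ.trace).re ≤ 1)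
    (k : ℕ) (P : Fin k → Matrix d d ℂ)
    (hP : ∀ i, (P i).IsHermitian) (hPproj : ∀ i, P i * P i = P i) :
    (((List.ofFn P).reverse.prod * ρ * (List.ofFn P).prod).trace).re ≥
      (ρ.trace).re -
        2 * Real.sqrt (∑ i, ((ρ * ((1 : Matrix d d ℂ) - P i)).trace).re) := by
  classical
  set S : Matrix d d ℂ := (open scoped MatrixOrder in CFC.sqrt ρ) with hSdef
  have hS : S.PosSemidef := by open scoped MatrixOrder in exact (CFC.sqrt_nonneg ρ).posSemidef
  have hSH : Sᴴ = S := hS.1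
  have hSS : S * S = ρ := by open scoped MatrixOrder in exact CFC.sqrt_mul_sqrt_self ρ hρ.nonneg
  set P' : ℕ → Matrix d d ℂ := fun i => if h : i < k then P ⟨i, h⟩ else 1 with hP'def
  have hP'H : ∀ i, (P' i)ᴴ = P' i := by
    intro i; simp only [hP'def]; split
    · exact (hP _)
    · simp
  have hP'I : ∀ i, P' i * P' i = P' i := by
    intro i; simp only [hP'def]; split
    · exact hPproj _
    · simp
  set Q : ℕ → Matrix d d ℂ := fun i => 1 - P' i with hQdef
  have hQH : ∀ i, (Q i)ᴴ = Q i := by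
    intro i; simp [hQdef, hP'H i]
  have hQI : ∀ i, Q i * Q i = Q i := by
    intro i
    simp only [hQdef, Matrix.mul_sub, Matrix.sub_mul, Matrix.one_mul, Matrix.mul_one, hP'I i]
    abel
  set R : ℕ → Matrix d d ℂ := fun i => ((List.range' i (k - i)).map P').prod with hRdef
  have hRk : R k = 1 := by simp [hRdef]
  have hRstep : ∀ i, i < k → R i = P' i * R (i + 1) := by
    intro i hi
    have h1 : k - i = (k - (i + 1)) + 1 := by omega
    rw [hRdef]
    simp only
    rw [h1, List.range'_succ, List.map_cons, List.prod_cons]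
  -- the list products
  have hofn : List.ofFn P = (List.range' 0 k).map P' := by
    apply List.ext_getElem
    · simp
    · intro i h1 h2
      have hik : i < k := by simpa using h2
      simp only [List.getElem_ofFn, List.getElem_map, List.getElem_range']
      simp [hP'def, hik]
  have hE' : (List.ofFn P).prod = R 0 := by
    rw [hofn]
    simp only [hRdef, Nat.sub_zero]
  have hM : (List.ofFn P).reverse.prod = (R 0)ᴴ := by
    rw [← hE', Matrix.conjTranspose_list_prod, List.map_ofFn]
    have hcp : conjTranspose ∘ P = P := funext fun j => (hP j)
    rw [hcp]
  set M : Matrix d d ℂ := (R 0)ᴴ with hMdef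
  -- telescoping identity
  have htel : ∀ n j, k - j = n → j ≤ k → 1 - R j = ∑ i ∈ Finset.Ico j k, Q i * R (i + 1) := by
    intro n
    induction n with
    | zero =>
      intro j h1 h2
      have : j = k := by omega
      subst this
      simp [hRk]
    | succ n ih =>
      intro j h1 h2
      have hjk : j < k := by omega
      rw [Finset.sum_eq_sum_Ico_succ_bot hjk, ← ih (j + 1) (by omega) (by omega),
        hRstep j hjk]
      simp only [hQdef, Matrix.sub_mul, Matrix.one_mul]
      abel
  have hstar : 1 - M = ∑ i ∈ Finset.range k, (R (i + 1))ᴴ * Q i := by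
    have := htel (k - 0) 0 rfl (Nat.zero_le k)
    rw [Finset.range_eq_Ico]
    calc 1 - M = (1 - R 0)ᴴ := by simp [hMdef]
      _ = (∑ i ∈ Finset.Ico 0 k, Q i * R (i + 1))ᴴ := by rw [this]
      _ = ∑ i ∈ Finset.Ico 0 k, (R (i + 1))ᴴ * Q i := by
          rw [Matrix.conjTranspose_sum]
          exact Finset.sum_congr rfl fun i _ => by rw [Matrix.conjTranspose_mul, hQH i]
  -- now real quantities
  set a : ℕ → ℝ := fun i => ‖toE (Q i * (R (i + 1) * S))‖ with hadef
  set b : ℕ → ℝ := fun i => ‖toE (Q i * S)‖ with hbdef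
  -- step A/B : sum of a² ≤ 1
  have hf : ∀ i ∈ Finset.range k, a i ^ 2 = nsq (R (i + 1) * S) - nsq (R i * S) := by
    intro i hi
    have hik : i < k := Finset.mem_range.1 hi
    have hp := pythagoras (P' i) (R (i + 1) * S) (hP'H i) (hP'I i) (hQH i) (hQI i)
    have : R i * S = P' i * (R (i + 1) * S) := by rw [hRstep i hik, Matrix.mul_assoc]
    rw [this]
    have : a i ^ 2 = nsq (Q i * (R (i + 1) * S)) := rfl
    rw [this]
    linarith [hp]
  have htrρ : nsq S = (ρ.trace).re := by
    rw [nsq_eq, hSH, hSS]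
  have hsumA : ∑ i ∈ Finset.range k, a i ^ 2 ≤ 1 := by
    rw [Finset.sum_congr rfl hf, Finset.sum_range_sub (fun i => nsq (R i * S)) k, hRk]
    have h0 : (0:ℝ) ≤ nsq (R 0 * S) := sq_nonneg _
    have : nsq ((1 : Matrix d d ℂ) * S) = nsq S := by rw [Matrix.one_mul]
    rw [this]
    linarith [htrρ, hρtr]
  -- b² sum = ε
  have hb2 : ∀ i : Fin k, ((ρ * ((1 : Matrix d d ℂ) - P i)).trace).re = b (i : ℕ) ^ 2 := by
    intro i
    have hQP : Q (i : ℕ) = 1 - P i := by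
      simp only [hQdef, hP'def]
      rw [dif_pos i.isLt]
    have : b (i : ℕ) ^ 2 = nsq (Q (i : ℕ) * S) := rfl
    rw [this, nsq_eq, herm_idem_cross _ _ (hQH _) (hQI _), hSH, ← Matrix.mul_assoc,
      Matrix.trace_mul_comm (S * Q (i : ℕ)) S, ← Matrix.mul_assoc, hSS, hQP]
  set ε : ℝ := ∑ i : Fin k, ((ρ * ((1 : Matrix d d ℂ) - P i)).trace).re with hεdef
  have hsumB : ∑ i ∈ Finset.range k, b i ^ 2 = ε := by
    rw [hεdef, Finset.sum_congr rfl (fun i _ => rfl)]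
    rw [show (∑ i : Fin k, ((ρ * ((1 : Matrix d d ℂ) - P i)).trace).re)
        = ∑ i : Fin k, b (i : ℕ) ^ 2 from Finset.sum_congr rfl fun i _ => hb2 i]
    exact (Fin.sum_univ_eq_sum_range (fun i => b i ^ 2) k).symm
  have hεnn : 0 ≤ ε := by
    rw [← hsumB]
    exact Finset.sum_nonneg fun i _ => sq_nonneg _
  -- LHS equals nsq (M * S)
  have hLHS : (((List.ofFn P).reverse.prod * ρ * (List.ofFn P).prod).trace).re
      = nsq (M * S) := by
    rw [hM, hE', nsq_eq, Matrix.trace_mul_comm ((M * S)ᴴ) (M * S)]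
    congr 2
    rw [Matrix.conjTranspose_mul, hSH, hMdef, Matrix.conjTranspose_conjTranspose, ← hSS]
    simp only [Matrix.mul_assoc]
  -- inner product expansion
  have key2 : (inner ℂ (toE S) (toE S - toE (M * S)) : ℂ).re
      = ∑ i ∈ Finset.range k, (inner ℂ (toE (Q i * (R (i + 1) * S))) (toE (Q i * S)) : ℂ).re := by
    rw [← toE_sub, inner_toE]
    have h1 : S - M * S = (1 - M) * S := by rw [Matrix.sub_mul, Matrix.one_mul]
    rw [h1, hstar, Finset.sum_mul, Matrix.mul_sum, Matrix.trace_sum, Complex.re_sum]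
    refine Finset.sum_congr rfl fun i _ => ?_
    rw [inner_toE]
    refine congrArg Complex.re ?_
    rw [← cross (R (i + 1)) (Q i) S (hQH i) (hQI i), Matrix.mul_assoc]
  -- norm bound
  have key1 : nsq S - nsq (M * S) ≤ 2 * (inner ℂ (toE S) (toE S - toE (M * S)) : ℂ).re := by
    have h := norm_sub_sq (𝕜 := ℂ) (toE S) (toE (M * S))
    have h2 : (inner ℂ (toE S) (toE S - toE (M * S)) : ℂ).re
        = ‖toE S‖ ^ 2 - (inner ℂ (toE S) (toE (M * S)) : ℂ).re := by
      rw [inner_sub_right, Complex.sub_re]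
      congr 1
      exact inner_self_eq_norm_sq (𝕜 := ℂ) (toE S)
    have h3 : (0:ℝ) ≤ ‖toE S - toE (M * S)‖ ^ 2 := sq_nonneg _
    simp only [RCLike.re_to_complex] at h
    rw [h2]
    simp only [nsq]
    linarith
  have key3 : ∀ i ∈ Finset.range k,
      (inner ℂ (toE (Q i * (R (i + 1) * S))) (toE (Q i * S)) : ℂ).re ≤ a i * b i := by
    intro i _
    have := re_inner_le_norm (𝕜 := ℂ) (toE (Q i * (R (i + 1) * S))) (toE (Q i * S))
    simpa using this
  have key4 : ∑ i ∈ Finset.range k, a i * b i ≤ Real.sqrt ε := by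
    have hnn : (0:ℝ) ≤ ∑ i ∈ Finset.range k, a i * b i :=
      Finset.sum_nonneg fun i _ => mul_nonneg (norm_nonneg _) (norm_nonneg _)
    have hcs := Finset.sum_mul_sq_le_sq_mul_sq (Finset.range k) a b
    calc ∑ i ∈ Finset.range k, a i * b i
        = Real.sqrt ((∑ i ∈ Finset.range k, a i * b i) ^ 2) := (Real.sqrt_sq hnn).symm
      _ ≤ Real.sqrt ((∑ i ∈ Finset.range k, a i ^ 2) * ∑ i ∈ Finset.range k, b i ^ 2) :=
          Real.sqrt_le_sqrt hcs
      _ ≤ Real.sqrt (1 * ε) := by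
          apply Real.sqrt_le_sqrt
          rw [hsumB]
          exact mul_le_mul_of_nonneg_right hsumA hεnn
      _ = Real.sqrt ε := by rw [one_mul]
  -- combine
  rw [hLHS, ge_iff_le, ← htrρ]
  have hchain : (inner ℂ (toE S) (toE S - toE (M * S)) : ℂ).re ≤ Real.sqrt ε := by
    rw [key2]
    exact le_trans (Finset.sum_le_sum key3) key4
  linarith
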